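/- Let ν ≥ 1 and κ ≥ 1 be integers, and let S(x) := x^ν Q(x), where Q is a real polynomial of degree at most κ. If y ∈ [0,1] satisfies |S(y)| = ‖S‖_{[0,1]} and ‖S‖_{[0,1]} > 0, then y > 1 − 10κ/ν. -/

import Mathlib

open Finset Nat

section auxx
lemma aux_prod1 (i : ℕ) : ∏ j ∈ Finset.range i, (i - j) = i ! := by
  calc ∏ j ∈ Finset.range i, (i - j)
      = ∏ j ∈ Finset.range i, ((i - 1 - j) + 1) := by
        exact Finset.prod_congr rfl fun j hj => by
          have := Finset.mem_range.mp hj; omega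
    _ = ∏ j ∈ Finset.range i, (j + 1) := Finset.prod_range_reflect (fun j => j + 1) i
    _ = i ! := Finset.prod_range_add_one_eq_factorial i

lemma aux_prod2 (n i : ℕ) (h : i ≤ n) :
    ∏ j ∈ Finset.Ico (i+1) (n+1), (j - i) = (n - i)! := by
  rw [Finset.prod_Ico_eq_prod_range]
  have h1 : n + 1 - (i+1) = n - i := by omega
  rw [h1, ← Finset.prod_range_add_one_eq_factorial (n - i)]
  exact Finset.prod_congr rfl fun j hj => by omega

lemma aux_prod3 (n i : ℕ) (h : i ≤ n) :
    ∏ j ∈ (Finset.range (n+1)).erase i, |(j:ℝ) - (i:ℝ)| = ((i ! * (n - i)! : ℕ) : ℝ) := by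
  have hset : (Finset.range (n+1)).erase i = Finset.range i ∪ Finset.Ico (i+1) (n+1) := by
    ext j
    simp only [Finset.mem_erase, Finset.mem_range, Finset.mem_union, Finset.mem_Ico]
    omega
  have hdisj : Disjoint (Finset.range i) (Finset.Ico (i+1) (n+1)) := by
    rw [Finset.disjoint_left]
    intro a ha hb
    simp only [Finset.mem_range] at ha
    simp only [Finset.mem_Ico] at hb
    omega
  rw [hset, Finset.prod_union hdisj]
  have e1 : ∏ j ∈ Finset.range i, |(j:ℝ) - (i:ℝ)| = ((i ! : ℕ) : ℝ) := by
    rw [← aux_prod1 i, Nat.cast_prod]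
    refine Finset.prod_congr rfl fun j hj => ?_
    have hji := Finset.mem_range.mp hj
    rw [abs_sub_comm, abs_of_nonneg (by simp only [sub_nonneg]; exact_mod_cast hji.le),
        Nat.cast_sub hji.le]
  have e2 : ∏ j ∈ Finset.Ico (i+1) (n+1), |(j:ℝ) - (i:ℝ)| = (((n - i)! : ℕ) : ℝ) := by
    rw [← aux_prod2 n i h, Nat.cast_prod]
    refine Finset.prod_congr rfl fun j hj => ?_
    have hji := (Finset.mem_Ico.mp hj).1
    rw [abs_of_nonneg (by simp only [sub_nonneg]; exact_mod_cast (by omega : i ≤ j)),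
        Nat.cast_sub (by omega)]
  rw [e1, e2]; push_cast; ring

lemma aux_sum_inv_fact (n : ℕ) :
    ∑ i ∈ Finset.range (n+1), (((i ! * (n - i)! : ℕ) : ℝ))⁻¹ = 2^n / n ! := by
  have : ∀ i ∈ Finset.range (n+1), (((i ! * (n - i)! : ℕ) : ℝ))⁻¹
      = (n.choose i : ℝ) / (n ! : ℝ) := by
    intro i hi
    have hin : i ≤ n := by have := Finset.mem_range.mp hi; omega
    rw [Nat.cast_choose ℝ hin]
    push_cast
    have h1 : (i ! : ℝ) ≠ 0 := by positivity
    have h2 : ((n-i)! : ℝ) ≠ 0 := by positivity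
    have h3 : (n ! : ℝ) ≠ 0 := by positivity
    field_simp
  rw [Finset.sum_congr rfl this, ← Finset.sum_div]
  norm_cast
  rw [Nat.sum_range_choose]

lemma aux_pow_fact (n : ℕ) : ((n:ℝ))^n / n ! ≤ Real.exp n := by
  calc ((n:ℝ))^n / n ! ≤ ∑ i ∈ Finset.range (n+1), (n:ℝ) ^ i / i !  := by
        refine Finset.single_le_sum (f := fun i => (n:ℝ)^i / (i ! : ℕ)) ?_ ?_
        · intro i _; positivity
        · simp
    _ ≤ Real.exp n := Real.sum_le_exp_of_nonneg (by positivity) _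
end auxx

open Polynomial

/-- Let `ν ≥ 1` and `κ ≥ 1` be integers, and `S(x) := x^ν Q(x)` with `Q` a real
polynomial of degree at most `κ`. If `y ∈ [0,1]` satisfies `|S(y)| = ‖S‖_{[0,1]}`
and `‖S‖_{[0,1]} > 0`, then `y > 1 - 10κ/ν`. -/
theorem stmt_14 (ν κ : ℕ) (hν : 1 ≤ ν) (hκ : 1 ≤ κ) (Q : Polynomial ℝ)
    (hQ : Q.natDegree ≤ κ) (y : ℝ) (hy : y ∈ Set.Icc (0:ℝ) 1)
    (hmax : |y ^ ν * Q.eval y| =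
      ⨆ t : Set.Icc (0:ℝ) 1, |(t : ℝ) ^ ν * Q.eval (t : ℝ)|)
    (hpos : 0 < ⨆ t : Set.Icc (0:ℝ) 1, |(t : ℝ) ^ ν * Q.eval (t : ℝ)|) :
    1 - 10 * (κ : ℝ) / (ν : ℝ) < y := by
  have hy0 : (0:ℝ) ≤ y := hy.1
  have hy1 : y ≤ 1 := hy.2
  have hνpos : (0:ℝ) < ν := by exact_mod_cast hν
  have hκpos : (0:ℝ) < κ := by exact_mod_cast hκ
  have hbdd : BddAbove (Set.range fun t : Set.Icc (0:ℝ) 1 => |(t:ℝ) ^ ν * Q.eval (t:ℝ)|) := by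
    have hcont : Continuous fun x : ℝ => |x ^ ν * Q.eval x| :=
      (continuous_pow ν |>.mul Q.continuous).abs
    have himg := (isCompact_Icc (a := (0:ℝ)) (b := 1)).bddAbove_image hcont.continuousOn
    refine himg.mono ?_
    rintro z ⟨t, rfl⟩
    exact ⟨(t:ℝ), t.2, rfl⟩
  have hub : ∀ t ∈ Set.Icc (0:ℝ) 1, |t ^ ν * Q.eval t| ≤ |y ^ ν * Q.eval y| := by
    intro t ht
    rw [hmax]
    exact le_ciSup hbdd ⟨t, ht⟩
  have hgy : 0 < |y ^ ν * Q.eval y| := by rw [hmax]; exact hpos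
  have hQy : Q.eval y ≠ 0 := by
    intro h0
    simp only [h0, mul_zero, abs_zero] at hgy
    exact lt_irrefl 0 hgy
  have hQyabs : 0 < |Q.eval y| := abs_pos.mpr hQy
  have hypos : 0 < y := by
    rcases hy0.lt_or_eq with hlt | heq
    · exact hlt
    · exfalso
      rw [← heq, zero_pow (by omega : ν ≠ 0), zero_mul, abs_zero] at hgy
      exact lt_irrefl 0 hgy
  by_contra hcon
  push_neg at hcon
  set L : ℝ := 1 - y with hLdef
  have hLlb : 10 * (κ:ℝ) / ν ≤ L := by simp only [hLdef]; linarith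
  have hLpos : 0 < L := lt_of_lt_of_le (by positivity) hLlb
  set d : ℝ := L / (2*κ) with hd
  set h : ℝ := L / 2 with hh
  have hdpos : 0 < d := by positivity
  have hhpos : 0 < h := by positivity
  have hκd : (κ:ℝ) * d = h := by rw [hd, hh]; field_simp
  set v : ℕ → ℝ := fun j => y + h + j * d with hv
  have hvinj : Set.InjOn v (Finset.range (κ+1)) := by
    intro a _ b _ hab
    simp only [hv] at hab
    have h1 : (a:ℝ) * d = b * d := by linarith
    have h2 : (a:ℝ) = b := mul_right_cancel₀ hdpos.ne' h1
    exact_mod_cast h2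
  have hv_ge : ∀ j : ℕ, y + h ≤ v j := by
    intro j
    simp only [hv]
    have : (0:ℝ) ≤ j * d := by positivity
    linarith
  have hv_mem : ∀ j ∈ Finset.range (κ+1), v j ∈ Set.Icc (0:ℝ) 1 := by
    intro j hj
    have hjκ : (j:ℝ) ≤ κ := by exact_mod_cast Nat.lt_succ_iff.mp (Finset.mem_range.mp hj)
    constructor
    · have := hv_ge j; linarith
    · simp only [hv]
      have : (j:ℝ) * d ≤ κ * d := by
        apply mul_le_mul_of_nonneg_right hjκ hdpos.le
      rw [hκd] at this
      rw [hh] at this ⊢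
      simp only [hLdef] at this ⊢
      linarith
  -- node value bound
  set E : ℝ := Real.exp (-(ν * h)) with hE
  have hnode : ∀ j ∈ Finset.range (κ+1), |Q.eval (v j)| ≤ E * |Q.eval y| := by
    intro j hj
    have hvj := hv_mem j hj
    have hvjy : y + h ≤ v j := hv_ge j
    have hvjpos : 0 < v j := lt_of_lt_of_le (by positivity) hvjy
    have h1 : (v j)^ν * |Q.eval (v j)| ≤ y^ν * |Q.eval y| := by
      have h2 := hub (v j) hvj
      simp only [abs_mul, abs_pow, abs_of_nonneg hvj.1, abs_of_nonneg hy0] at h2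
      exact h2
    have hratio : y / (v j) ≤ Real.exp (-h) := by
      have hr1 : y / v j ≤ y / (y + h) := by
        exact div_le_div_of_nonneg_left hy0 (by positivity) hvjy
      have hr2 : y / (y + h) ≤ 1 - h := by
        rw [div_le_iff₀ (by positivity)]
        have hyh1 : y + h ≤ 1 := by
          rw [hh]; simp only [hLdef]; linarith
        nlinarith
      have hr3 : 1 - h ≤ Real.exp (-h) := by
        have := Real.add_one_le_exp (-h)
        linarith
      linarith
    have h3 : |Q.eval (v j)| ≤ (y / v j)^ν * |Q.eval y| := by
      rw [div_pow]
      rw [div_mul_eq_mul_div, le_div_iff₀ (by positivity)]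
      calc |Q.eval (v j)| * (v j)^ν = (v j)^ν * |Q.eval (v j)| := by ring
        _ ≤ y^ν * |Q.eval y| := h1
        _ = y^ν * |Q.eval y| := rfl
    calc |Q.eval (v j)| ≤ (y / v j)^ν * |Q.eval y| := h3
      _ ≤ Real.exp (-h)^ν * |Q.eval y| := by
          apply mul_le_mul_of_nonneg_right _ (abs_nonneg _)
          exact pow_le_pow_left₀ (by positivity) hratio ν
      _ = E * |Q.eval y| := by
          rw [hE, ← Real.exp_nat_mul]
          ring_nf
  -- Lagrange representation
  have hdeg : Q.degree < (Finset.range (κ+1)).card := by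
    rw [Finset.card_range]
    calc Q.degree ≤ (Q.natDegree : WithBot ℕ) := Polynomial.degree_le_natDegree
      _ < ((κ+1 : ℕ) : WithBot ℕ) := by exact_mod_cast Nat.lt_succ_of_le hQ
  have hrep := Lagrange.eq_interpolate (v := v) hvinj hdeg
  have heval : Q.eval y = ∑ i ∈ Finset.range (κ+1),
      Q.eval (v i) * Polynomial.eval y (Lagrange.basis (Finset.range (κ+1)) v i) := by
    conv_lhs => rw [hrep]
    rw [Lagrange.interpolate_apply, Polynomial.eval_finset_sum]
    exact Finset.sum_congr rfl fun i _ => by rw [Polynomial.eval_mul, Polynomial.eval_C]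
  -- basis bound
  have hbasis : ∀ i ∈ Finset.range (κ+1),
      |Polynomial.eval y (Lagrange.basis (Finset.range (κ+1)) v i)|
        ≤ (2*(κ:ℝ))^κ * (((i ! * (κ - i)! : ℕ) : ℝ))⁻¹ := by
    intro i hi
    have hiκ : i ≤ κ := Nat.lt_succ_iff.mp (Finset.mem_range.mp hi)
    have hcard : ((Finset.range (κ+1)).erase i).card = κ := by
      rw [Finset.card_erase_of_mem hi, Finset.card_range]
      omega
    rw [Lagrange.basis, Polynomial.eval_prod, Finset.abs_prod]
    have hfac : ∀ j ∈ (Finset.range (κ+1)).erase i,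
        |Polynomial.eval y (Lagrange.basisDivisor (v i) (v j))|
          ≤ (2*(κ:ℝ)) * |(j:ℝ) - (i:ℝ)|⁻¹ := by
      intro j hj
      obtain ⟨hji, hjr⟩ := Finset.mem_erase.mp hj
      have hjκ : (j:ℝ) ≤ κ := by exact_mod_cast Nat.lt_succ_iff.mp (Finset.mem_range.mp hjr)
      have hΔpos : 0 < |(j:ℝ) - (i:ℝ)| := by
        rw [abs_pos, sub_ne_zero]
        exact fun hc => hji (by exact_mod_cast hc)
      have heb : Polynomial.eval y (Lagrange.basisDivisor (v i) (v j))
          = (v i - v j)⁻¹ * (y - v j) := by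
        simp [Lagrange.basisDivisor]
      have hvij : v i - v j = ((i:ℝ) - j) * d := by simp only [hv]; ring
      have hyvj : |y - v j| = h + j * d := by
        rw [abs_sub_comm, abs_of_nonneg (by have := hv_ge j; linarith [hhpos])]
        simp only [hv]; ring
      rw [heb, abs_mul, abs_inv, hvij, abs_mul, abs_of_nonneg hdpos.le, abs_sub_comm, hyvj]
      have hnum : h + (j:ℝ) * d ≤ L := by
        have h1 : (j:ℝ) * d ≤ κ * d := mul_le_mul_of_nonneg_right hjκ hdpos.le
        rw [hκd] at h1
        rw [hh] at h1 ⊢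
        linarith
      have hLd : L = 2*(κ:ℝ)*d := by rw [hd]; field_simp
      calc (|(j:ℝ) - i| * d)⁻¹ * (h + j*d)
          ≤ (|(j:ℝ) - i| * d)⁻¹ * (2*(κ:ℝ)*d) := by
            apply mul_le_mul_of_nonneg_left (hLd ▸ hnum) (by positivity)
        _ = (2*(κ:ℝ)) * |(j:ℝ) - (i:ℝ)|⁻¹ := by
            rw [mul_inv]
            field_simp
    calc ∏ j ∈ (Finset.range (κ+1)).erase i, |Polynomial.eval y (Lagrange.basisDivisor (v i) (v j))|
        ≤ ∏ j ∈ (Finset.range (κ+1)).erase i, (2*(κ:ℝ)) * |(j:ℝ) - (i:ℝ)|⁻¹ :=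
          Finset.prod_le_prod (fun j _ => abs_nonneg _) hfac
      _ = (2*(κ:ℝ))^κ * (∏ j ∈ (Finset.range (κ+1)).erase i, |(j:ℝ) - (i:ℝ)|)⁻¹ := by
          rw [Finset.prod_mul_distrib, Finset.prod_const, hcard, ← Finset.prod_inv_distrib]
      _ = (2*(κ:ℝ))^κ * (((i ! * (κ - i)! : ℕ) : ℝ))⁻¹ := by
          rw [aux_prod3 κ i hiκ]
  -- put it together
  have hmain : |Q.eval y| ≤ E * |Q.eval y| * ((2*(κ:ℝ))^κ * (2^κ / κ !)) := by
    calc |Q.eval y| = |∑ i ∈ Finset.range (κ+1),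
          Q.eval (v i) * Polynomial.eval y (Lagrange.basis (Finset.range (κ+1)) v i)| := by
          rw [← heval]
      _ ≤ ∑ i ∈ Finset.range (κ+1),
          |Q.eval (v i)| * |Polynomial.eval y (Lagrange.basis (Finset.range (κ+1)) v i)| := by
          refine (Finset.abs_sum_le_sum_abs _ _).trans ?_
          exact le_of_eq (Finset.sum_congr rfl fun i _ => abs_mul _ _)
      _ ≤ ∑ i ∈ Finset.range (κ+1),
          (E * |Q.eval y|) * ((2*(κ:ℝ))^κ * (((i ! * (κ - i)! : ℕ) : ℝ))⁻¹) := by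
          refine Finset.sum_le_sum fun i hi => ?_
          exact mul_le_mul (hnode i hi) (hbasis i hi) (abs_nonneg _)
            (by positivity)
      _ = (E * |Q.eval y|) * ((2*(κ:ℝ))^κ *
            ∑ i ∈ Finset.range (κ+1), (((i ! * (κ - i)! : ℕ) : ℝ))⁻¹) := by
          rw [← Finset.mul_sum, ← Finset.mul_sum]
      _ = E * |Q.eval y| * ((2*(κ:ℝ))^κ * (2^κ / κ !)) := by
          rw [aux_sum_inv_fact]
  -- numeric bound
  have hνh : 5 * (κ:ℝ) ≤ ν * h := by
    have h1 : (ν:ℝ) * (10 * κ / ν) ≤ ν * L := mul_le_mul_of_nonneg_left hLlb hνpos.le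
    have h2 : (ν:ℝ) * (10 * κ / ν) = 10 * κ := by field_simp
    rw [h2] at h1
    have h3 : 2 * ((ν:ℝ) * h) = ν * L := by rw [hh]; ring
    linarith
  have hEle : E ≤ Real.exp (-(5*(κ:ℝ))) := by
    rw [hE]
    apply Real.exp_le_exp.mpr
    linarith
  have hfactbd : (2*(κ:ℝ))^κ * (2^κ / κ !) ≤ (4 * Real.exp 1)^κ := by
    have h1 : (2*(κ:ℝ))^κ * (2^κ / κ !) = 4^κ * ((κ:ℝ)^κ / κ !) := by
      have h4 : (4:ℝ)^κ = 2^κ * 2^κ := by rw [← mul_pow]; norm_num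
      rw [mul_pow, h4]
      ring
    rw [h1]
    have h2 : ((κ:ℝ))^κ / κ ! ≤ Real.exp κ := aux_pow_fact κ
    have h3 : Real.exp (κ:ℝ) = (Real.exp 1)^κ := by
      rw [← Real.exp_nat_mul]; ring_nf
    calc (4:ℝ)^κ * ((κ:ℝ)^κ / κ !) ≤ 4^κ * Real.exp κ := by
          apply mul_le_mul_of_nonneg_left h2 (by positivity)
      _ = (4 * Real.exp 1)^κ := by rw [h3, mul_pow]
  have hsmall : E * ((2*(κ:ℝ))^κ * (2^κ / κ !)) < 1 := by
    have h1 : E * ((2*(κ:ℝ))^κ * (2^κ / κ !))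
        ≤ Real.exp (-(5*(κ:ℝ))) * (4 * Real.exp 1)^κ := by
      apply mul_le_mul hEle hfactbd (by positivity) (Real.exp_pos _).le
    have h2 : Real.exp (-(5*(κ:ℝ))) * (4 * Real.exp 1)^κ = (4 * Real.exp (-4))^κ := by
      rw [show (-(5*(κ:ℝ))) = (κ:ℝ) * (-5) by ring, Real.exp_nat_mul, ← mul_pow]
      congr 1
      rw [show (4:ℝ) * Real.exp (-4) = 4 * (Real.exp (-5) * Real.exp 1) by
        rw [← Real.exp_add]; norm_num]
      ring
    have h5 : 4 * Real.exp (-4:ℝ) < 1 := by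
      have h6 : (5:ℝ) ≤ Real.exp 4 := by have := Real.add_one_le_exp (4:ℝ); linarith
      have h7 : Real.exp (-4:ℝ) * Real.exp 4 = 1 := by rw [← Real.exp_add]; norm_num
      nlinarith [Real.exp_pos (-4:ℝ)]
    calc E * ((2*(κ:ℝ))^κ * (2^κ / κ !)) ≤ Real.exp (-(5*(κ:ℝ))) * (4 * Real.exp 1)^κ := h1
      _ = (4 * Real.exp (-4))^κ := h2
      _ < 1 := pow_lt_one₀ (by positivity) h5 (by omega)
  have : |Q.eval y| < |Q.eval y| := by
    calc |Q.eval y| ≤ E * |Q.eval y| * ((2*(κ:ℝ))^κ * (2^κ / κ !)) := hmain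
      _ = (E * ((2*(κ:ℝ))^κ * (2^κ / κ !))) * |Q.eval y| := by ring
      _ < 1 * |Q.eval y| := by
          apply mul_lt_mul_of_pos_right hsmall hQyabs
      _ = |Q.eval y| := one_mul _
  exact lt_irrefl _ this
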